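/- Let f(x) = x^2 + ax + b ∈ ℤ[x] with b ≠ 0, and let α, β ∈ ℂ be its roots. Suppose neither α, nor β, nor αβ^{-1} is a root of unity. Then for every T ≥ 1, the number of primes ℓ such that f mod ℓ has a root in \overline{𝔽_ℓ} of multiplicative order ≤ T, or such that the ratio of the two roots of f mod ℓ has order ≤ T, is O(T^2 log M) for some constant M depending only on a and b. -/
import Mathlib


/-- `x^2 + a x + b mod ℓ` has a root in `\overline{𝔽_ℓ}` of (positive) multiplicative
order at most `T`, or the ratio of its two roots has (positive) multiplicative order at
most `T`. The roots `x, y` are characterized by Vieta's relations `x + y = -a`,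
`x y = b`. -/
def badPrime (a b : ℤ) (T : ℕ) (ℓ : ℕ) [Fact ℓ.Prime] : Prop :=
  ∃ x y : AlgebraicClosure (ZMod ℓ),
    x + y = -(algebraMap (ZMod ℓ) (AlgebraicClosure (ZMod ℓ)) ((a : ZMod ℓ))) ∧
    x * y = algebraMap (ZMod ℓ) (AlgebraicClosure (ZMod ℓ)) ((b : ZMod ℓ)) ∧
    ((0 < orderOf x ∧ orderOf x ≤ T) ∨
     (0 < orderOf (x * y⁻¹) ∧ orderOf (x * y⁻¹) ≤ T))

def lucasS (a b : ℤ) : ℕ → ℤ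
  | 0 => 2
  | 1 => -a
  | (n+2) => -a * lucasS a b (n+1) - b * lucasS a b n

lemma lucasS_cast {R : Type*} [CommRing R] (a b : ℤ) (x y : R)
    (hs : x + y = -(a : R)) (hp : x * y = (b : R)) :
    ∀ n, ((lucasS a b n : R)) = x ^ n + y ^ n := by
  have key : ∀ n, ((lucasS a b n : R)) = x ^ n + y ^ n ∧
      ((lucasS a b (n+1) : R)) = x ^ (n+1) + y ^ (n+1) := by
    intro n
    induction n with
    | zero =>
      constructor
      · simp only [lucasS]; norm_num
      · simp only [lucasS]
        push_cast
        rw [← hs]; ring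
    | succ n ih =>
      refine ⟨ih.2, ?_⟩
      show ((lucasS a b (n+2) : R)) = _
      simp only [lucasS]
      push_cast
      rw [ih.1, ih.2]
      have ha : -(a : R) = x + y := hs.symm
      have hbR : (b : R) = x * y := hp.symm
      calc -(a:R) * (x ^ (n+1) + y ^ (n+1)) - (b:R) * (x ^ n + y ^ n)
          = (x + y) * (x ^ (n+1) + y ^ (n+1)) - (x * y) * (x ^ n + y ^ n) := by
            rw [← ha, ← hbR]
        _ = x ^ (n+2) + y ^ (n+2) := by ring
  exact fun n => (key n).1

def intA (a b : ℤ) (t : ℕ) : ℤ := b ^ t - lucasS a b t + 1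
def intB (a b : ℤ) (t : ℕ) : ℤ := 2 * b ^ (2*t) - b ^ t * lucasS a b (2*t)
def bigN (a b : ℤ) (T : ℕ) : ℤ := ∏ t ∈ Finset.Icc 1 T, intA a b t * intB a b t

lemma intA_cast {R : Type*} [CommRing R] (a b : ℤ) (x y : R)
    (hs : x + y = -(a : R)) (hp : x * y = (b : R)) (t : ℕ) :
    ((intA a b t : R)) = (x ^ t - 1) * (y ^ t - 1) := by
  simp only [intA]
  push_cast
  rw [lucasS_cast a b x y hs hp t, ← hp]
  ring

lemma intB_cast {R : Type*} [CommRing R] (a b : ℤ) (x y : R)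
    (hs : x + y = -(a : R)) (hp : x * y = (b : R)) (t : ℕ) :
    ((intB a b t : R)) = (x ^ (2*t) - (x*y) ^ t) * (y ^ (2*t) - (x*y) ^ t) := by
  simp only [intB]
  push_cast
  rw [lucasS_cast a b x y hs hp (2*t), ← hp]
  ring

lemma bad_dvd (a b : ℤ) (T : ℕ) (ℓ : ℕ) [h : Fact ℓ.Prime]
    (hbad : badPrime a b T ℓ) : (ℓ : ℤ) ∣ bigN a b T := by
  obtain ⟨x, y, hs, hp, hcase⟩ := hbad
  have hs' : x + y = -((a : ℤ) : AlgebraicClosure (ZMod ℓ)) := by rw [hs, map_intCast]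
  have hp' : x * y = ((b : ℤ) : AlgebraicClosure (ZMod ℓ)) := by rw [hp, map_intCast]
  suffices hz : ((bigN a b T : ℤ) : AlgebraicClosure (ZMod ℓ)) = 0 by
    have h1 : ((bigN a b T : ZMod ℓ)) = 0 := by
      apply (algebraMap (ZMod ℓ) (AlgebraicClosure (ZMod ℓ))).injective
      rw [map_intCast, map_zero]
      exact hz
    exact (ZMod.intCast_zmod_eq_zero_iff_dvd _ _).mp h1
  rw [bigN]
  push_cast
  rcases hcase with ⟨ht1, ht2⟩ | ⟨ht1, ht2⟩
  · apply Finset.prod_eq_zero (Finset.mem_Icc.mpr ⟨ht1, ht2⟩)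
    rw [intA_cast a b x y hs' hp', pow_orderOf_eq_one x]
    ring
  · set t := orderOf (x * y⁻¹) with htdef
    have hy : y ≠ 0 := by
      intro hy0
      have hfin : IsOfFinOrder (x * y⁻¹) := orderOf_pos_iff.mp ht1
      obtain ⟨n, hn, hn1⟩ := isOfFinOrder_iff_pow_eq_one.mp hfin
      rw [hy0, inv_zero, mul_zero, zero_pow hn.ne'] at hn1
      exact zero_ne_one hn1
    have hxy : x ^ t = y ^ t := by
      have h1 : (x * y⁻¹) ^ t = 1 := pow_orderOf_eq_one _
      rw [mul_pow, inv_pow] at h1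
      field_simp at h1
      exact h1
    apply Finset.prod_eq_zero (Finset.mem_Icc.mpr ⟨ht1, ht2⟩)
    rw [intB_cast a b x y hs' hp']
    have : x ^ (2*t) - (x*y) ^ t = 0 := by
      rw [two_mul, pow_add, mul_pow, hxy]
      ring
    rw [this]
    ring

lemma lucasS_bound (a b : ℤ) (n : ℕ) :
    |lucasS a b n| ≤ 2 * (|a| + |b| + 2) ^ n := by
  set K : ℤ := |a| + |b| + 2 with hKdef
  have hK2 : (2:ℤ) ≤ K := by
    have := abs_nonneg a; have := abs_nonneg b; omega
  have hK1 : (1:ℤ) ≤ K := by omega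
  have key : ∀ n, |lucasS a b n| ≤ 2 * K ^ n ∧ |lucasS a b (n+1)| ≤ 2 * K ^ (n+1) := by
    intro n
    induction n with
    | zero =>
      constructor
      · simp [lucasS]
      · show |lucasS a b 1| ≤ 2 * K ^ 1
        simp only [lucasS, abs_neg, pow_one]
        have hb0 := abs_nonneg b
        linarith
    | succ n ih =>
      refine ⟨ih.2, ?_⟩
      have hKn : (1:ℤ) ≤ K ^ n := one_le_pow₀ hK1
      have h1 := ih.1
      have h2 := ih.2
      have habs : |lucasS a b (n+2)| ≤ |a| * |lucasS a b (n+1)| + |b| * |lucasS a b n| := by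
        show |(-a * lucasS a b (n+1) - b * lucasS a b n)| ≤ _
        calc |(-a * lucasS a b (n+1) - b * lucasS a b n)|
            ≤ |(-a * lucasS a b (n+1))| + |b * lucasS a b n| := abs_sub _ _
          _ = |a| * |lucasS a b (n+1)| + |b| * |lucasS a b n| := by
              rw [abs_mul, abs_mul, abs_neg]
      have hstep : |a| * |lucasS a b (n+1)| + |b| * |lucasS a b n|
          ≤ |a| * (2 * K ^ (n+1)) + |b| * (2 * K ^ n) :=
        add_le_add (mul_le_mul_of_nonneg_left h2 (abs_nonneg a))
          (mul_le_mul_of_nonneg_left h1 (abs_nonneg b))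
      have hfin : |a| * (2 * K ^ (n+1)) + |b| * (2 * K ^ n) ≤ 2 * K ^ (n+2) := by
        have e1 : K ^ (n+1) = K ^ n * K := pow_succ K n
        have e2 : K ^ (n+2) = K ^ n * K * K := by rw [pow_succ, pow_succ]
        rw [e1, e2]
        have ha0 := abs_nonneg a
        have hb0 := abs_nonneg b
        have hKK : |a| * K + |b| ≤ K * K := by nlinarith [hKdef]
        have h0 : (0:ℤ) ≤ 2 * K ^ n := by positivity
        nlinarith [mul_le_mul_of_nonneg_left hKK h0]
      linarith [habs, hstep, hfin]
  exact (key n).1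

lemma intA_bound (a b : ℤ) (t : ℕ) (ht : 1 ≤ t) :
    |intA a b t| ≤ (|a| + |b| + 2) ^ (3 * t) := by
  set K : ℤ := |a| + |b| + 2 with hKdef
  have hK2 : (2:ℤ) ≤ K := by
    have := abs_nonneg a; have := abs_nonneg b; omega
  have hK1 : (1:ℤ) ≤ K := by omega
  have hbK : |b| ≤ K := by have := abs_nonneg a; omega
  have hKt : (1:ℤ) ≤ K ^ t := one_le_pow₀ hK1
  have h1 : |b ^ t| ≤ K ^ t := by
    rw [abs_pow]; exact pow_le_pow_left₀ (abs_nonneg b) hbK t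
  have h2 := lucasS_bound a b t
  rw [← hKdef] at h2
  have h3 : |intA a b t| ≤ 4 * K ^ t := by
    have : |intA a b t| ≤ |b ^ t| + |lucasS a b t| + 1 := by
      simp only [intA]
      calc |b ^ t - lucasS a b t + 1| ≤ |b ^ t - lucasS a b t| + |(1:ℤ)| := abs_add_le _ _
        _ ≤ |b ^ t| + |lucasS a b t| + |(1:ℤ)| := by
            have := abs_sub (b ^ t) (lucasS a b t); omega
        _ = |b ^ t| + |lucasS a b t| + 1 := by norm_num
    linarith
  calc |intA a b t| ≤ 4 * K ^ t := h3
    _ ≤ K ^ 2 * K ^ t := by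
        have : (4:ℤ) ≤ K ^ 2 := by nlinarith
        have h0 : (0:ℤ) ≤ K ^ t := by positivity
        nlinarith
    _ = K ^ (t + 2) := by rw [pow_add]; ring
    _ ≤ K ^ (3 * t) := pow_le_pow_right₀ hK1 (by omega)

lemma intB_bound (a b : ℤ) (t : ℕ) (ht : 1 ≤ t) :
    |intB a b t| ≤ (|a| + |b| + 2) ^ (5 * t) := by
  set K : ℤ := |a| + |b| + 2 with hKdef
  have hK2 : (2:ℤ) ≤ K := by
    have := abs_nonneg a; have := abs_nonneg b; omega
  have hK1 : (1:ℤ) ≤ K := by omega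
  have hbK : |b| ≤ K := by have := abs_nonneg a; omega
  have h1 : |b ^ (2*t)| ≤ K ^ (2*t) := by
    rw [abs_pow]; exact pow_le_pow_left₀ (abs_nonneg b) hbK _
  have h1' : |b ^ t| ≤ K ^ t := by
    rw [abs_pow]; exact pow_le_pow_left₀ (abs_nonneg b) hbK _
  have h2 := lucasS_bound a b (2*t)
  rw [← hKdef] at h2
  have hKt : (1:ℤ) ≤ K ^ (2*t) := one_le_pow₀ hK1
  have h3 : |intB a b t| ≤ 2 * K ^ (2*t) + 2 * (K ^ t * K ^ (2*t)) := by
    have habs : |intB a b t| ≤ 2 * |b ^ (2*t)| + |b ^ t| * |lucasS a b (2*t)| := by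
      simp only [intB]
      calc |2 * b ^ (2*t) - b ^ t * lucasS a b (2*t)|
          ≤ |2 * b ^ (2*t)| + |b ^ t * lucasS a b (2*t)| := abs_sub _ _
        _ = 2 * |b ^ (2*t)| + |b ^ t| * |lucasS a b (2*t)| := by
            rw [abs_mul, abs_mul]; norm_num
    have hmul : |b ^ t| * |lucasS a b (2*t)| ≤ K ^ t * (2 * K ^ (2*t)) :=
      mul_le_mul h1' h2 (abs_nonneg _) (by positivity)
    nlinarith [abs_nonneg (b ^ (2*t))]
  calc |intB a b t| ≤ 2 * K ^ (2*t) + 2 * (K ^ t * K ^ (2*t)) := h3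
    _ = 2 * K ^ (2*t) + 2 * K ^ (3*t) := by rw [← pow_add]; ring_nf
    _ ≤ 4 * K ^ (3*t) := by
        have : K ^ (2*t) ≤ K ^ (3*t) := pow_le_pow_right₀ hK1 (by omega)
        omega
    _ ≤ K ^ 2 * K ^ (3*t) := by
        have h4 : (4:ℤ) ≤ K ^ 2 := by nlinarith
        have h0 : (0:ℤ) ≤ K ^ (3*t) := by positivity
        nlinarith
    _ = K ^ (3*t + 2) := by rw [pow_add]; ring
    _ ≤ K ^ (5*t) := pow_le_pow_right₀ hK1 (by omega)

lemma bigN_bound (a b : ℤ) (T : ℕ) :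
    |bigN a b T| ≤ (|a| + |b| + 2) ^ (8 * T ^ 2) := by
  set K : ℤ := |a| + |b| + 2 with hKdef
  have hK2 : (2:ℤ) ≤ K := by
    have := abs_nonneg a; have := abs_nonneg b; omega
  have hK1 : (1:ℤ) ≤ K := by omega
  calc |bigN a b T| = ∏ t ∈ Finset.Icc 1 T, |intA a b t * intB a b t| := by
        rw [bigN, Finset.abs_prod]
    _ ≤ ∏ t ∈ Finset.Icc 1 T, K ^ (8 * t) := by
        apply Finset.prod_le_prod (fun t _ => abs_nonneg _)
        intro t htmem
        obtain ⟨ht1, ht2⟩ := Finset.mem_Icc.mp htmem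
        rw [abs_mul]
        calc |intA a b t| * |intB a b t| ≤ K ^ (3*t) * K ^ (5*t) :=
              mul_le_mul (intA_bound a b t ht1) (intB_bound a b t ht1)
                (abs_nonneg _) (by positivity)
          _ = K ^ (8 * t) := by rw [← pow_add]; ring_nf
    _ = K ^ (∑ t ∈ Finset.Icc 1 T, 8 * t) := by
        rw [Finset.prod_pow_eq_pow_sum]
    _ ≤ K ^ (8 * T ^ 2) := by
        apply pow_le_pow_right₀ hK1
        calc ∑ t ∈ Finset.Icc 1 T, 8 * t ≤ ∑ _t ∈ Finset.Icc 1 T, 8 * T := by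
              apply Finset.sum_le_sum
              intro i hi
              have := (Finset.mem_Icc.mp hi).2
              omega
          _ = T * (8 * T) := by rw [Finset.sum_const, Nat.card_Icc]; simp [smul_eq_mul]
          _ ≤ 8 * T ^ 2 := by ring_nf; omega

lemma bigN_ne_zero (a b : ℤ) (hb : b ≠ 0) (α β : ℂ)
    (hsum : α + β = -(a : ℂ)) (hprod : α * β = (b : ℂ))
    (hα : ∀ t : ℕ, 1 ≤ t → α ^ t ≠ 1)
    (hβ : ∀ t : ℕ, 1 ≤ t → β ^ t ≠ 1)
    (hαβ : ∀ t : ℕ, 1 ≤ t → (α * β⁻¹) ^ t ≠ 1) (T : ℕ) :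
    bigN a b T ≠ 0 := by
  have hbC : (b : ℂ) ≠ 0 := Int.cast_ne_zero.mpr hb
  have hαβ0 : α * β ≠ 0 := by rw [hprod]; exact hbC
  have hα0 : α ≠ 0 := left_ne_zero_of_mul hαβ0
  have hβ0 : β ≠ 0 := right_ne_zero_of_mul hαβ0
  have hs' : α + β = -((a : ℤ) : ℂ) := by exact_mod_cast hsum
  have hp' : α * β = ((b : ℤ) : ℂ) := by exact_mod_cast hprod
  rw [bigN]
  rw [Finset.prod_ne_zero_iff]
  intro t htmem
  obtain ⟨ht1, _⟩ := Finset.mem_Icc.mp htmem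
  apply mul_ne_zero
  · intro h0
    have hc : ((intA a b t : ℤ) : ℂ) = 0 := by rw [h0]; norm_num
    rw [intA_cast a b α β hs' hp'] at hc
    rcases mul_eq_zero.mp hc with hc1 | hc1
    · exact hα t ht1 (by linear_combination hc1)
    · exact hβ t ht1 (by linear_combination hc1)
  · intro h0
    have hc : ((intB a b t : ℤ) : ℂ) = 0 := by rw [h0]; norm_num
    rw [intB_cast a b α β hs' hp'] at hc
    have hkey : α ^ t = β ^ t → False := by
      intro he
      apply hαβ t ht1
      rw [mul_pow, inv_pow, he, mul_inv_cancel₀ (pow_ne_zero t hβ0)]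
    rcases mul_eq_zero.mp hc with hc1 | hc1
    · apply hkey
      have h2 : α ^ t * α ^ t = α ^ t * β ^ t := by
        rw [← pow_add, ← mul_pow]
        have : 2 * t = t + t := by ring
        rw [this] at hc1
        linear_combination hc1
      exact mul_left_cancel₀ (pow_ne_zero t hα0) h2
    · apply hkey
      have h2 : β ^ t * β ^ t = β ^ t * α ^ t := by
        have : 2 * t = t + t := by ring
        rw [this] at hc1
        have := sub_eq_zero.mp hc1
        rw [pow_add] at this
        rw [this, mul_pow]
        ring
      exact (mul_left_cancel₀ (pow_ne_zero t hβ0) h2).symm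


/-- Let `f = x² + a x + b ∈ ℤ[x]` with `b ≠ 0` whose complex roots `α, β` are such that
neither `α`, nor `β`, nor `α β⁻¹` is a root of unity. Then there is a constant `C > 0`
(depending only on `a, b`) such that for every `T ≥ 2`, the set of primes `ℓ` for which
`f mod ℓ` has a root of multiplicative order `≤ T` in `\overline{𝔽_ℓ}`, or the ratio of
its two roots has order `≤ T`, is finite of cardinality at most `C · T² · log T`. -/
theorem stmt_14 (a b : ℤ) (hb : b ≠ 0) (α β : ℂ)
    (hsum : α + β = -(a : ℂ)) (hprod : α * β = (b : ℂ))
    (hα : ∀ t : ℕ, 1 ≤ t → α ^ t ≠ 1)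
    (hβ : ∀ t : ℕ, 1 ≤ t → β ^ t ≠ 1)
    (hαβ : ∀ t : ℕ, 1 ≤ t → (α * β⁻¹) ^ t ≠ 1) :
    ∃ C : ℝ, 0 < C ∧ ∀ T : ℕ, 2 ≤ T →
      {ℓ : ℕ | ∃ h : Fact ℓ.Prime, @badPrime a b T ℓ h}.Finite ∧
      ((Nat.card {ℓ : ℕ | ∃ h : Fact ℓ.Prime, @badPrime a b T ℓ h} : ℕ) : ℝ)
        ≤ C * (T : ℝ) ^ 2 * Real.log T := by
  set k : ℕ := (|a| + |b| + 2).natAbs with hkdef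
  have hk2 : 2 ≤ k := by
    have := abs_nonneg a; have := abs_nonneg b; omega
  have hL2 : (0:ℝ) < Real.log 2 := Real.log_pos (by norm_num)
  have hLk : Real.log 2 ≤ Real.log k :=
    Real.log_le_log (by norm_num) (by exact_mod_cast hk2)
  have hLk0 : (0:ℝ) < Real.log k := lt_of_lt_of_le hL2 hLk
  refine ⟨8 * Real.log k / (Real.log 2) ^ 2, by positivity, ?_⟩
  intro T hT
  set S := {ℓ : ℕ | ∃ h : Fact ℓ.Prime, @badPrime a b T ℓ h} with hSdef
  set n : ℕ := (bigN a b T).natAbs with hndef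
  have hn0 : n ≠ 0 :=
    Int.natAbs_ne_zero.mpr (bigN_ne_zero a b hb α β hsum hprod hα hβ hαβ T)
  have hsub : S ⊆ ↑n.primeFactors := by
    intro ℓ hℓ
    obtain ⟨hfact, hbad⟩ := hℓ
    have hd : (ℓ : ℤ) ∣ bigN a b T := @bad_dvd a b T ℓ hfact hbad
    have hd' : ℓ ∣ n := by
      have := Int.natAbs_dvd_natAbs.mpr hd
      simpa using this
    simp only [Finset.coe_sort_coe, Finset.mem_coe]
    exact Nat.mem_primeFactors.mpr ⟨hfact.out, hd', hn0⟩
  have hfin : S.Finite := Set.Finite.subset (Finset.finite_toSet _) hsub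
  refine ⟨hfin, ?_⟩
  have hc1 : Nat.card S ≤ n.primeFactors.card := by
    rw [Nat.card_coe_set_eq]
    calc S.ncard ≤ (↑n.primeFactors : Set ℕ).ncard :=
          Set.ncard_le_ncard hsub (Finset.finite_toSet _)
      _ = n.primeFactors.card := Set.ncard_coe_finset _
  have h2n : 2 ^ n.primeFactors.card ≤ n := by
    calc 2 ^ n.primeFactors.card ≤ ∏ p ∈ n.primeFactors, p :=
          Finset.pow_card_le_prod n.primeFactors (fun p => p) 2 (fun p hp => (Nat.prime_of_mem_primeFactors hp).two_le)
      _ ≤ n := Nat.le_of_dvd (Nat.pos_of_ne_zero hn0) (Nat.prod_primeFactors_dvd n)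
  have hnk : n ≤ k ^ (8 * T ^ 2) := by
    have hZ : (n : ℤ) ≤ (|a| + |b| + 2) ^ (8 * T ^ 2) := by
      rw [hndef, Int.natCast_natAbs]
      exact bigN_bound a b T
    have hkZ : ((k : ℤ)) = |a| + |b| + 2 := by
      rw [hkdef, Int.natCast_natAbs]
      have := abs_nonneg a; have := abs_nonneg b
      rw [abs_of_nonneg (by omega)]
    rw [← hkZ] at hZ
    exact_mod_cast hZ
  -- pass to real logs
  set c : ℕ := n.primeFactors.card with hcdef
  have hreal : (c : ℝ) * Real.log 2 ≤ (8 * T ^ 2 : ℝ) * Real.log k := by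
    have h1 : (2:ℝ) ^ c ≤ (k:ℝ) ^ (8 * T ^ 2) := by
      have : (2:ℕ) ^ c ≤ k ^ (8 * T ^ 2) := le_trans h2n hnk
      exact_mod_cast this
    have h2 : Real.log ((2:ℝ) ^ c) ≤ Real.log ((k:ℝ) ^ (8 * T ^ 2)) :=
      Real.log_le_log (by positivity) h1
    rw [Real.log_pow, Real.log_pow] at h2
    calc (c : ℝ) * Real.log 2 ≤ ((8 * T ^ 2 : ℕ) : ℝ) * Real.log k := h2
      _ = (8 * T ^ 2 : ℝ) * Real.log k := by push_cast; ring
  have hTlog : Real.log 2 ≤ Real.log T :=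
    Real.log_le_log (by norm_num) (by exact_mod_cast hT)
  have hcC : (c : ℝ) ≤ 8 * Real.log k / (Real.log 2) ^ 2 * (T : ℝ) ^ 2 * Real.log T := by
    have hT0 : (0:ℝ) ≤ (T:ℝ) ^ 2 := by positivity
    have key : (c : ℝ) * (Real.log 2) ^ 2 ≤ 8 * Real.log k * (T:ℝ) ^ 2 * Real.log T := by
      nlinarith [mul_le_mul_of_nonneg_right hreal hL2.le, mul_le_mul_of_nonneg_left hTlog (by positivity : (0:ℝ) ≤ 8 * (T:ℝ)^2 * Real.log k)]
    calc (c : ℝ) = (c : ℝ) * (Real.log 2) ^ 2 / (Real.log 2) ^ 2 := by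
          field_simp
      _ ≤ 8 * Real.log k * (T:ℝ) ^ 2 * Real.log T / (Real.log 2) ^ 2 := by
          apply div_le_div_of_nonneg_right key (by positivity) |>.trans_eq rfl
      _ = 8 * Real.log k / (Real.log 2) ^ 2 * (T : ℝ) ^ 2 * Real.log T := by
          ring
  calc ((Nat.card S : ℕ) : ℝ) ≤ (c : ℝ) := by exact_mod_cast hc1
    _ ≤ _ := hcC
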